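/- Let ρ be a Riesz seminorm on a vector lattice X and let B be a nonempty subset of X. Then B is almost pseudo-bounded with respect to ρ if and only if for every ε > 0 there exists u ∈ X⁺ such that ρ((|x| − u)⁺) ≤ ε for all x ∈ B. -/

import Mathlib

open Filter Topology Pointwise

/-- For a Riesz seminorm `ρ` on a vector lattice `X` and a nonempty set `B`,
`B` is almost pseudo-bounded iff for every `ε > 0` there is `u ∈ X⁺` with
`ρ((|x| - u)⁺) ≤ ε` for all `x ∈ B`. -/
theorem stmt_0 {X : Type*} [Lattice X] [AddCommGroup X] [Module ℝ X]
    [CovariantClass X X (· + ·) (· ≤ ·)] [PosSMulMono ℝ X]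
    (ρ : X → ℝ)
    (hhom : ∀ (c : ℝ) (x : X), ρ (c • x) = |c| * ρ x)
    (hsub : ∀ x y : X, ρ (x + y) ≤ ρ x + ρ y)
    (hmono : ∀ x y : X, |x| ≤ |y| → ρ x ≤ ρ y)
    (B : Set X) (hB : B.Nonempty) :
    (∀ ε : ℝ, 0 < ε → ∃ a b : X, a ≤ b ∧ B ⊆ Set.Icc a b + ε • {x : X | ρ x ≤ 1}) ↔
      (∀ ε : ℝ, 0 < ε → ∃ u : X, 0 ≤ u ∧ ∀ x ∈ B, ρ ((|x| - u) ⊔ 0) ≤ ε) := by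
  constructor
  · intro h ε hε
    obtain ⟨a, b, hab, hsub'⟩ := h ε hε
    refine ⟨|a| ⊔ |b|, le_trans (abs_nonneg a) le_sup_left, ?_⟩
    intro x hx
    obtain ⟨z, hz, w, hw, rfl⟩ := hsub' hx
    obtain ⟨w, hw, rfl⟩ := hw
    have hzu : |z| ≤ |a| ⊔ |b| := abs_le'.2
      ⟨le_trans hz.2 (le_trans (le_abs_self b) le_sup_right),
       le_trans (neg_le_neg_iff.mpr hz.1) (le_trans (neg_le_abs a) le_sup_left)⟩
    have h1 : (|z + ε • w| - (|a| ⊔ |b|)) ⊔ 0 ≤ |ε • w| := by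
      exact sup_le (sub_le_iff_le_add'.2
        (le_trans (abs_add_le z (ε • w)) (add_le_add_left hzu _))) (abs_nonneg _)
    have h2 : ρ ((|z + ε • w| - (|a| ⊔ |b|)) ⊔ 0) ≤ ρ (ε • w) := by
      have := hmono ((|z + ε • w| - (|a| ⊔ |b|)) ⊔ 0) (|ε • w|) (by
        rw [abs_abs, abs_of_nonneg le_sup_right]; exact h1)
      calc ρ ((|z + ε • w| - (|a| ⊔ |b|)) ⊔ 0) ≤ ρ |ε • w| := this
        _ ≤ ρ (ε • w) := hmono _ _ (by rw [abs_abs])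
    refine h2.trans ?_
    rw [hhom, abs_of_pos hε]
    calc ε * ρ w ≤ ε * 1 := by
          exact mul_le_mul_of_nonneg_left hw hε.le
      _ = ε := mul_one ε
  · intro h ε hε
    obtain ⟨u, hu, hρ⟩ := h ε hε
    refine ⟨-u, u, neg_le_self hu, ?_⟩
    intro x hx
    set y := (x ⊓ u) ⊔ (-u) with hy
    have hy1 : -u ≤ y := le_sup_right
    have hy2 : y ≤ u := sup_le (le_trans inf_le_right le_rfl) (neg_le_self hu)
    have hxy1 : x - y ≤ (|x| - u) ⊔ 0 := by
      have : x - y ≤ x - (x ⊓ u) := sub_le_sub_left le_sup_left _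
      refine this.trans ?_
      rw [sub_inf]
      refine sup_le ?_ ?_
      · simp
      · exact le_sup_left.trans (sup_le_sup_right (sub_le_sub_right (le_abs_self x) u) 0)
    have hxy2 : y - x ≤ (|x| - u) ⊔ 0 := by
      rw [hy, sup_sub]
      refine sup_le ?_ ?_
      · refine le_trans ?_ le_sup_right
        simpa using inf_le_left (a := x) (b := u)
      · refine le_trans ?_ le_sup_left
        have : -x ≤ |x| := neg_le_abs x
        calc -u - x ≤ -u + |x| := by
              simpa [sub_eq_add_neg, add_comm] using add_le_add_left this (-u)
          _ = |x| - u := by abel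
    have habs : |x - y| ≤ (|x| - u) ⊔ 0 := by
      exact abs_le'.2 ⟨hxy1, by simpa [neg_sub] using hxy2⟩
    have hρxy : ρ (x - y) ≤ ε := by
      refine le_trans (hmono _ _ ?_) (hρ x hx)
      rwa [abs_of_nonneg le_sup_right]
    rw [Set.mem_add]
    refine ⟨y, ⟨hy1, hy2⟩, x - y, ?_, by abel⟩
    rw [Set.mem_smul_set]
    refine ⟨ε⁻¹ • (x - y), ?_, by rw [smul_smul, mul_inv_cancel₀ hε.ne', one_smul]⟩
    rw [Set.mem_setOf_eq, hhom, abs_of_pos (inv_pos.2 hε)]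
    exact inv_mul_le_one_of_le₀ hρxy hε.le
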